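/- Let T be a finite dyadic tree on (0,1]^d, F̃⁽ⁿ⁾ a probability measure, and define G ∈ 𝒫_T by G(A_l|A) = (1−c(A))μ(A_l|A) + c(A)·F̃⁽ⁿ⁾(A_l|A) for each interior node A with c(A) ∈ (0,1] (with the convention F̃⁽ⁿ⁾(A_l|A) = μ(A_l|A) if F̃⁽ⁿ⁾(A) = 0). Then the improvement D = ∑_{A∈ℒ(T)} F̃⁽ⁿ⁾(A) log(G(A)/μ(A)) satisfies D ≥ 0, with D > 0 unless F̃⁽ⁿ⁾(A) = μ(A) for all A ∈ ℒ(T). -/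

import Mathlib

open MeasureTheory Set

/-- An axis-aligned half-open box `∏ⱼ (lo j, hi j]` in `ℝ^d`. -/
structure Box (d : ℕ) where
  lo : Fin d → ℝ
  hi : Fin d → ℝ

/-- The subset of `ℝ^d` represented by a box. -/
def Box.set {d : ℕ} (B : Box d) : Set (Fin d → ℝ) :=
  Set.univ.pi fun j => Ioc (B.lo j) (B.hi j)

/-- The left child obtained by splitting coordinate `j` at `s`. -/
def Box.left {d : ℕ} (B : Box d) (j : Fin d) (s : ℝ) : Box d :=
  ⟨B.lo, Function.update B.hi j s⟩

/-- The right child obtained by splitting coordinate `j` at `s`. -/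
def Box.right {d : ℕ} (B : Box d) (j : Fin d) (s : ℝ) : Box d :=
  ⟨Function.update B.lo j s, B.hi⟩

/-- A finite dyadic partition tree whose interior nodes carry the split coordinate `j`,
the split point `s` and the node-specific learning rate `c = c(A) ∈ (0,1]`. -/
inductive STree (d : ℕ) where
  | leaf : STree d
  | node (j : Fin d) (s c : ℝ) (l r : STree d) : STree d

/-- Validity: split points interior to the current box, learning rates in `(0,1]`. -/
def STree.valid {d : ℕ} : STree d → Box d → Prop
  | .leaf, B => ∀ i, B.lo i < B.hi i
  | .node j s c l r, B =>
      (∀ i, B.lo i < B.hi i) ∧ B.lo j < s ∧ s < B.hi j ∧ 0 < c ∧ c ≤ 1 ∧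
        l.valid (B.left j s) ∧ r.valid (B.right j s)

/-- The list of leaf boxes of the tree grown from box `B`. -/
def leafBoxes {d : ℕ} : STree d → Box d → List (Box d)
  | .leaf, B => [B]
  | .node j s _ l r, B => leafBoxes l (B.left j s) ++ leafBoxes r (B.right j s)

/-- The improvement `D = ∑_{A ∈ ℒ(T)} F̃(A) log (G(A)/μ(A))`, computed with accumulators
`gAcc` (the product of the shrunken conditionals `G(A_l|A) = (1−c(A))μ(A_l|A) + c(A)F̃(A_l|A)`
along the branch, i.e. `G(A)`) and `mAcc` (the product of the uniform conditionals,
i.e. `μ(A)`); the convention `F̃(A_l|A) = μ(A_l|A)` is used when `F̃(A) = 0`. -/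
noncomputable def improvement {d : ℕ} (Ft : Measure (Fin d → ℝ)) :
    STree d → Box d → ℝ → ℝ → ℝ
  | .leaf, B, gAcc, mAcc => (Ft B.set).toReal * Real.log (gAcc / mAcc)
  | .node j s c l r, B, gAcc, mAcc =>
      let Bl := B.left j s
      let Br := B.right j s
      let μl := (volume Bl.set).toReal / (volume B.set).toReal
      let fl := if Ft B.set = 0 then μl else (Ft Bl.set).toReal / (Ft B.set).toReal
      let θ := (1 - c) * μl + c * fl
      improvement Ft l Bl (gAcc * θ) (mAcc * μl) +
        improvement Ft r Br (gAcc * (1 - θ)) (mAcc * (1 - μl))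

/-- The unit box `(0,1]^d`. -/
def unitBox (d : ℕ) : Box d := ⟨fun _ => 0, fun _ => 1⟩

lemma Box.meas {d : ℕ} (B : Box d) : MeasurableSet B.set :=
  MeasurableSet.univ_pi fun _ => measurableSet_Ioc

lemma Box.volume_eq {d : ℕ} (B : Box d) :
    volume B.set = ∏ i, ENNReal.ofReal (B.hi i - B.lo i) := by
  rw [Box.set, volume_pi_pi]
  simp [Real.volume_Ioc]

lemma Box.volume_lt_top {d : ℕ} (B : Box d) : volume B.set < ⊤ := by
  rw [B.volume_eq]
  exact ENNReal.prod_lt_top fun i _ => ENNReal.ofReal_lt_top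

lemma Box.volume_pos {d : ℕ} (B : Box d) (h : ∀ i, B.lo i < B.hi i) :
    0 < (volume B.set).toReal := by
  rw [B.volume_eq]
  rw [ENNReal.toReal_prod]
  exact Finset.prod_pos fun i _ => by
    rw [ENNReal.toReal_ofReal (by linarith [h i])]; linarith [h i]

lemma split_union {d : ℕ} (B : Box d) (j : Fin d) (s : ℝ) (h1 : B.lo j ≤ s) (h2 : s ≤ B.hi j) :
    (B.left j s).set ∪ (B.right j s).set = B.set := by
  ext x
  simp only [Box.set, Box.left, Box.right, Set.mem_union, Set.mem_univ_pi, Set.mem_Ioc]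
  constructor
  · rintro (h | h) i
    · rcases h i with ⟨ha, hb⟩
      refine ⟨ha, ?_⟩
      rcases eq_or_ne i j with rfl | hij
      · rw [Function.update_self] at hb; linarith
      · rwa [Function.update_of_ne hij] at hb
    · rcases h i with ⟨ha, hb⟩
      refine ⟨?_, hb⟩
      rcases eq_or_ne i j with rfl | hij
      · rw [Function.update_self] at ha; linarith
      · rwa [Function.update_of_ne hij] at ha
  · intro h
    by_cases hxs : x j ≤ s
    · left; intro i
      rcases eq_or_ne i j with rfl | hij
      · exact ⟨(h i).1, by rw [Function.update_self]; exact hxs⟩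
      · exact ⟨(h i).1, by rw [Function.update_of_ne hij]; exact (h i).2⟩
    · right; intro i
      rcases eq_or_ne i j with rfl | hij
      · exact ⟨by rw [Function.update_self]; linarith, (h i).2⟩
      · exact ⟨by rw [Function.update_of_ne hij]; exact (h i).1, (h i).2⟩

lemma split_disjoint {d : ℕ} (B : Box d) (j : Fin d) (s : ℝ) :
    Disjoint (B.left j s).set (B.right j s).set := by
  rw [Set.disjoint_left]
  intro x hl hr
  have h1 := hl j (Set.mem_univ j)
  have h2 := hr j (Set.mem_univ j)
  simp only [Box.left, Box.right, Function.update_self, Set.mem_Ioc] at h1 h2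
  linarith [h1.2, h2.1]

lemma measure_split {d : ℕ} (μ : Measure (Fin d → ℝ)) (B : Box d) (j : Fin d) (s : ℝ)
    (h1 : B.lo j ≤ s) (h2 : s ≤ B.hi j) :
    μ B.set = μ (B.left j s).set + μ (B.right j s).set := by
  rw [← split_union B j s h1 h2, measure_union (split_disjoint B j s) (Box.meas _)]

lemma left_subset {d : ℕ} (B : Box d) (j : Fin d) (s : ℝ) (h2 : s ≤ B.hi j) :
    (B.left j s).set ⊆ B.set := by
  intro x hx i _
  have h := hx i (Set.mem_univ i)
  simp only [Box.left, Set.mem_Ioc] at h ⊢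
  refine ⟨h.1, ?_⟩
  rcases eq_or_ne i j with rfl | hij
  · rw [Function.update_self] at h; linarith [h.2]
  · rw [Function.update_of_ne hij] at h; exact h.2

lemma right_subset {d : ℕ} (B : Box d) (j : Fin d) (s : ℝ) (h1 : B.lo j ≤ s) :
    (B.right j s).set ⊆ B.set := by
  intro x hx i _
  have h := hx i (Set.mem_univ i)
  simp only [Box.right, Set.mem_Ioc] at h ⊢
  refine ⟨?_, h.2⟩
  rcases eq_or_ne i j with rfl | hij
  · rw [Function.update_self] at h; linarith [h.1]
  · rw [Function.update_of_ne hij] at h; exact h.1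

lemma STree.valid_pos {d : ℕ} : ∀ (T : STree d) (B : Box d), T.valid B → ∀ i, B.lo i < B.hi i
  | .leaf, _, h => h
  | .node _ _ _ _ _, _, h => h.1

lemma leaf_subset {d : ℕ} : ∀ (T : STree d) (B : Box d), T.valid B →
    ∀ A ∈ leafBoxes T B, A.set ⊆ B.set := by
  intro T
  induction T with
  | leaf =>
    intro B _ A hA
    simp only [leafBoxes, List.mem_singleton] at hA
    subst hA; exact subset_rfl
  | node j s c l r ihl ihr =>
    intro B hv A hA
    obtain ⟨hB, hls, hsh, hc0, hc1, hvl, hvr⟩ := hv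
    simp only [leafBoxes, List.mem_append] at hA
    rcases hA with hA | hA
    · exact (ihl _ hvl A hA).trans (left_subset B j s hsh.le)
    · exact (ihr _ hvr A hA).trans (right_subset B j s hls.le)

lemma klBin_lt {f μ : ℝ} (hf0 : 0 ≤ f) (hf1 : f ≤ 1) (hμ0 : 0 < μ) (hμ1 : μ < 1) (hne : f ≠ μ) :
    f * Real.log μ + (1 - f) * Real.log (1 - μ) <
      f * Real.log f + (1 - f) * Real.log (1 - f) := by
  rcases eq_or_lt_of_le hf0 with rfl | hf0'
  · simp only [zero_mul, sub_zero, one_mul, zero_add, Real.log_one, mul_zero]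
    have := Real.log_neg (by linarith) (by linarith : (1:ℝ) - μ < 1)
    linarith
  rcases eq_or_lt_of_le hf1 with rfl | hf1'
  · simp only [one_mul, sub_self, zero_mul, add_zero, Real.log_one, mul_zero]
    have := Real.log_neg hμ0 hμ1
    linarith
  · have hfne : f ≠ 0 := ne_of_gt hf0'
    have h1fne : (1:ℝ) - f ≠ 0 := by linarith
    have hμf : Real.log (μ / f) < μ / f - 1 :=
      Real.log_lt_sub_one_of_pos (div_pos hμ0 hf0') (by
        intro h
        exact hne (by field_simp at h; linarith))
    have h2 : Real.log ((1 - μ) / (1 - f)) ≤ (1 - μ) / (1 - f) - 1 :=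
      Real.log_le_sub_one_of_pos (div_pos (by linarith) (by linarith))
    rw [Real.log_div (by linarith) hfne] at hμf
    rw [Real.log_div (by linarith) h1fne] at h2
    have c1 : f * (μ / f - 1) = μ - f := by field_simp
    have c2 : (1 - f) * ((1 - μ) / (1 - f) - 1) = (1 - μ) - (1 - f) := by field_simp
    have e1 := mul_lt_mul_of_pos_left hμf hf0'
    have e2 := mul_le_mul_of_nonneg_left h2 (by linarith : (0:ℝ) ≤ 1 - f)
    rw [c1] at e1
    rw [c2] at e2
    nlinarith [e1, e2]

lemma log_concave_step {x y a b : ℝ} (hx : 0 < x) (hy : 0 < y) (ha : 0 ≤ a) (hb : 0 ≤ b)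
    (hab : a + b = 1) : a * Real.log x + b * Real.log y ≤ Real.log (a * x + b * y) := by
  have := strictConcaveOn_log_Ioi.concaveOn.2 (Set.mem_Ioi.2 hx) (Set.mem_Ioi.2 hy) ha hb hab
  simpa [smul_eq_mul] using this

lemma weighted_step {f μ c : ℝ} (hf0 : 0 ≤ f) (hμ : 0 < μ) (hc0 : 0 ≤ c) (hc1 : c ≤ 1) :
    f * ((1 - c) * Real.log μ + c * Real.log f) ≤ f * Real.log ((1 - c) * μ + c * f) := by
  rcases eq_or_lt_of_le hf0 with rfl | hf'
  · simp
  · exact mul_le_mul_of_nonneg_left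
      (log_concave_step hμ hf' (by linarith) hc0 (by ring)) hf0

lemma bracket_ineq {f μ c : ℝ} (hf0 : 0 ≤ f) (hf1 : f ≤ 1) (hμ0 : 0 < μ) (hμ1 : μ < 1)
    (hc0 : 0 < c) (hc1 : c ≤ 1) :
    f * Real.log μ + (1 - f) * Real.log (1 - μ) ≤
      f * Real.log ((1 - c) * μ + c * f) + (1 - f) * Real.log ((1 - c) * (1 - μ) + c * (1 - f)) ∧
    (f * Real.log ((1 - c) * μ + c * f) + (1 - f) * Real.log ((1 - c) * (1 - μ) + c * (1 - f)) =
      f * Real.log μ + (1 - f) * Real.log (1 - μ) → f = μ) := by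
  by_cases hfμ : f = μ
  · subst hfμ
    have e1 : (1 - c) * f + c * f = f := by ring
    have e2 : (1 - c) * (1 - f) + c * (1 - f) = 1 - f := by ring
    rw [e1, e2]
    exact ⟨le_refl _, fun _ => rfl⟩
  · have hstrict : f * Real.log μ + (1 - f) * Real.log (1 - μ) <
        f * Real.log ((1 - c) * μ + c * f) + (1 - f) * Real.log ((1 - c) * (1 - μ) + c * (1 - f)) := by
      have w1 := weighted_step hf0 hμ0 hc0.le hc1
      have w2 := weighted_step (by linarith : (0:ℝ) ≤ 1 - f) (by linarith : (0:ℝ) < 1 - μ) hc0.le hc1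
      have hk := klBin_lt hf0 hf1 hμ0 hμ1 hfμ
      nlinarith [w1, w2, hk]
    exact ⟨hstrict.le, fun h => absurd h (by linarith)⟩

lemma improvement_zero {d : ℕ} (Ft : Measure (Fin d → ℝ)) :
    ∀ (T : STree d) (B : Box d), T.valid B → Ft B.set = 0 →
      ∀ g m : ℝ, improvement Ft T B g m = 0 := by
  intro T
  induction T with
  | leaf => intro B _ h0 g m; simp [improvement, h0]
  | node j s c l r ihl ihr =>
    intro B hv h0 g m
    obtain ⟨hB, hls, hsh, hc0, hc1, hvl, hvr⟩ := hv
    have hl0 : Ft (B.left j s).set = 0 :=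
      le_antisymm (h0 ▸ measure_mono (left_subset B j s hsh.le)) zero_le
    have hr0 : Ft (B.right j s).set = 0 :=
      le_antisymm (h0 ▸ measure_mono (right_subset B j s hls.le)) zero_le
    show improvement Ft l _ _ _ + improvement Ft r _ _ _ = 0
    rw [ihl _ hvl hl0, ihr _ hvr hr0, add_zero]

set_option maxHeartbeats 1000000 in
lemma main_lemma {d : ℕ} (Ft : Measure (Fin d → ℝ)) [IsProbabilityMeasure Ft] :
    ∀ (T : STree d) (B : Box d), T.valid B → ∀ g m : ℝ, 0 < g → 0 < m →
    (Ft B.set).toReal * Real.log (g / m) ≤ improvement Ft T B g m ∧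
    (improvement Ft T B g m = (Ft B.set).toReal * Real.log (g / m) →
      ∀ A ∈ leafBoxes T B,
        (Ft A.set).toReal * (volume B.set).toReal =
          (Ft B.set).toReal * (volume A.set).toReal) := by
  intro T
  induction T with
  | leaf =>
    intro B _ g m _ _
    refine ⟨le_of_eq rfl, fun _ A hA => ?_⟩
    simp only [leafBoxes, List.mem_singleton] at hA
    subst hA; ring
  | node j s c l r ihl ihr =>
    intro B hv g m hg hm
    obtain ⟨hB, hls, hsh, hc0, hc1, hvl, hvr⟩ := hv
    set Bl := B.left j s with hBldef
    set Br := B.right j s with hBrdef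
    have hposl := STree.valid_pos l _ hvl
    have hposr := STree.valid_pos r _ hvr
    have vBsplit : volume B.set = volume Bl.set + volume Br.set :=
      measure_split _ B j s hls.le hsh.le
    have FBsplit : Ft B.set = Ft Bl.set + Ft Br.set :=
      measure_split _ B j s hls.le hsh.le
    set F := (Ft B.set).toReal with hFdef
    set Fl := (Ft Bl.set).toReal with hFldef
    set Fr := (Ft Br.set).toReal with hFrdef
    set vB := (volume B.set).toReal with hvBdef
    set vl := (volume Bl.set).toReal with hvldef
    set vr := (volume Br.set).toReal with hvrdef
    have hvl0 : 0 < vl := Box.volume_pos _ hposl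
    have hvr0 : 0 < vr := Box.volume_pos _ hposr
    have hvB : vB = vl + vr := by
      rw [hvBdef, vBsplit,
        ENNReal.toReal_add (Box.volume_lt_top _).ne (Box.volume_lt_top _).ne]
    have hvB0 : 0 < vB := by rw [hvB]; linarith
    have hvBne : vB ≠ 0 := hvB0.ne'
    have hF : F = Fl + Fr := by
      rw [hFdef, FBsplit, ENNReal.toReal_add (measure_ne_top Ft _) (measure_ne_top Ft _)]
    have hFl0 : 0 ≤ Fl := ENNReal.toReal_nonneg
    have hFr0 : 0 ≤ Fr := ENNReal.toReal_nonneg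
    set μl := vl / vB with hμldef
    have hμl0 : 0 < μl := div_pos hvl0 hvB0
    have hμl1 : μl < 1 := by rw [hμldef, div_lt_one hvB0]; linarith
    have h1μl : 0 < 1 - μl := by linarith
    by_cases hF0 : Ft B.set = 0
    · have hz : improvement Ft (STree.node j s c l r) B g m = 0 :=
        improvement_zero Ft (STree.node j s c l r) B ⟨hB, hls, hsh, hc0, hc1, hvl, hvr⟩ hF0 g m
      have hFz : F = 0 := by rw [hFdef, hF0, ENNReal.toReal_zero]
      constructor
      · rw [hz, hFz, zero_mul]
      · intro _ A hA
        have hsub : A.set ⊆ B.set :=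
          leaf_subset (STree.node j s c l r) B ⟨hB, hls, hsh, hc0, hc1, hvl, hvr⟩ A hA
        have hA0 : Ft A.set = 0 := le_antisymm (hF0 ▸ measure_mono hsub) zero_le
        rw [hFz, hA0, ENNReal.toReal_zero, zero_mul, zero_mul]
    · have hFpos : 0 < F := ENNReal.toReal_pos hF0 (measure_ne_top Ft _)
      have hFlle : Fl ≤ F :=
        ENNReal.toReal_mono (measure_ne_top Ft _) (measure_mono (left_subset B j s hsh.le))
      set fl := Fl / F with hfldef
      have hfl0 : 0 ≤ fl := div_nonneg hFl0 hFpos.le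
      have hfl1 : fl ≤ 1 := (div_le_one hFpos).2 hFlle
      set θ := (1 - c) * μl + c * fl with hθdef
      have hθ0 : 0 ≤ θ := by
        rw [hθdef]
        have := mul_nonneg (sub_nonneg.2 hc1) hμl0.le
        have := mul_nonneg hc0.le hfl0
        linarith
      have hθ1 : θ ≤ 1 := by
        rw [hθdef]
        linarith [mul_le_mul_of_nonneg_left hμl1.le (sub_nonneg.2 hc1),
          mul_le_mul_of_nonneg_left hfl1 hc0.le]
      have hIeq : improvement Ft (STree.node j s c l r) B g m =
          improvement Ft l Bl (g * θ) (m * μl) +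
            improvement Ft r Br (g * (1 - θ)) (m * (1 - μl)) := by
        rw [hθdef, hμldef, hfldef, hFldef, hFdef, hvldef, hvBdef, hBldef, hBrdef]
        show (let μl' := (volume (B.left j s).set).toReal / (volume B.set).toReal
              let fl' := if Ft B.set = 0 then μl'
                else (Ft (B.left j s).set).toReal / (Ft B.set).toReal
              let θ' := (1 - c) * μl' + c * fl'
              improvement Ft l (B.left j s) (g * θ') (m * μl') +
                improvement Ft r (B.right j s) (g * (1 - θ')) (m * (1 - μl'))) = _
        simp only [if_neg hF0]
      clear_value Bl Br F Fl Fr vB vl vr μl fl θ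
      rw [hIeq]
      rcases eq_or_lt_of_le hθ0 with hθz | hθpos
      · -- θ = 0 : then fl = 0, left subtree has no Ft mass
        have hflz : fl = 0 := by
          refine le_antisymm ?_ hfl0
          by_contra h
          push_neg at h
          have h2 := mul_pos hc0 h
          have h3 := mul_nonneg (sub_nonneg.2 hc1) hμl0.le
          have h4 : (1 - c) * μl + c * fl = 0 := by rw [← hθdef]; exact hθz.symm
          linarith
        have hFlz : Fl = 0 := by
          rcases div_eq_zero_iff.1 (hfldef.symm.trans hflz) with h | h
          · exact h
          · exact absurd h hFpos.ne'
        have hFtBl0 : Ft Bl.set = 0 := by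
          by_contra h
          have := ENNReal.toReal_pos h (measure_ne_top Ft _)
          rw [← hFldef] at this; linarith
        have himpl0 : improvement Ft l Bl (g * θ) (m * μl) = 0 :=
          improvement_zero Ft l Bl hvl hFtBl0 _ _
        have h1θ : (0:ℝ) < 1 - θ := by rw [← hθz]; norm_num
        obtain ⟨ihrle, _⟩ := ihr Br hvr (g * (1 - θ)) (m * (1 - μl))
          (mul_pos hg h1θ) (mul_pos hm h1μl)
        have hFrF : Fr = F := by rw [hF]; rw [hFlz]; ring
        have hg1θ : g * (1 - θ) = g := by rw [← hθz]; ring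
        have hlog : Real.log (g * (1 - θ) / (m * (1 - μl))) =
            Real.log (g / m) - Real.log (1 - μl) := by
          rw [hg1θ, Real.log_div hg.ne' (mul_pos hm h1μl).ne',
            Real.log_mul hm.ne' h1μl.ne', Real.log_div hg.ne' hm.ne']
          ring
        have hlogneg : Real.log (1 - μl) < 0 := Real.log_neg h1μl (by linarith)
        simp only [← hFrdef] at ihrle
        rw [hFrF, hlog] at ihrle
        have key : F * Real.log (g / m) <
            improvement Ft l Bl (g * θ) (m * μl) +
              improvement Ft r Br (g * (1 - θ)) (m * (1 - μl)) := by
          rw [himpl0, zero_add]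
          have hstep : F * Real.log (g / m) <
              F * (Real.log (g / m) - Real.log (1 - μl)) := by
            rw [mul_sub]
            have := mul_pos hFpos (neg_pos.2 hlogneg)
            linarith
          linarith [ihrle, hstep]
        exact ⟨key.le, fun h => absurd h (ne_of_gt key)⟩
      rcases eq_or_lt_of_le hθ1 with hθo | hθlt
      · -- θ = 1 : then fl = 1, right subtree has no Ft mass
        have h1 : (1 - c) * μl + c * fl = 1 := by rw [← hθdef]; exact hθo
        have hflo : fl = 1 := by
          refine le_antisymm hfl1 ?_
          by_contra h
          push_neg at h
          have h2 := mul_lt_mul_of_pos_left h hc0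
          have h3 := mul_le_mul_of_nonneg_left hμl1.le (sub_nonneg.2 hc1)
          linarith [h1]
        have hFlF : Fl = F := by
          have h2 := hfldef.symm.trans hflo
          rw [div_eq_one_iff_eq hFpos.ne'] at h2
          exact h2
        have hFrz : Fr = 0 := by linarith [hF, hFlF]
        have hFtBr0 : Ft Br.set = 0 := by
          by_contra h
          have := ENNReal.toReal_pos h (measure_ne_top Ft _)
          rw [← hFrdef] at this; linarith
        have himpr0 : improvement Ft r Br (g * (1 - θ)) (m * (1 - μl)) = 0 :=
          improvement_zero Ft r Br hvr hFtBr0 _ _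
        obtain ⟨ihlle, _⟩ := ihl Bl hvl (g * θ) (m * μl)
          (mul_pos hg hθpos) (mul_pos hm hμl0)
        have hgθ : g * θ = g := by rw [hθo]; ring
        have hlog : Real.log (g * θ / (m * μl)) =
            Real.log (g / m) - Real.log μl := by
          rw [hgθ, Real.log_div hg.ne' (mul_pos hm hμl0).ne',
            Real.log_mul hm.ne' hμl0.ne', Real.log_div hg.ne' hm.ne']
          ring
        have hlogneg : Real.log μl < 0 := Real.log_neg hμl0 hμl1
        simp only [← hFldef] at ihlle
        rw [hFlF, hlog] at ihlle
        have key : F * Real.log (g / m) <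
            improvement Ft l Bl (g * θ) (m * μl) +
              improvement Ft r Br (g * (1 - θ)) (m * (1 - μl)) := by
          rw [himpr0, add_zero]
          have hstep : F * Real.log (g / m) <
              F * (Real.log (g / m) - Real.log μl) := by
            rw [mul_sub]
            have := mul_pos hFpos (neg_pos.2 hlogneg)
            linarith
          linarith [ihlle, hstep]
        exact ⟨key.le, fun h => absurd h (ne_of_gt key)⟩
      · -- 0 < θ < 1 : the generic case
        have h1θ : (0:ℝ) < 1 - θ := by linarith
        obtain ⟨ihlle, ihleq⟩ := ihl Bl hvl (g * θ) (m * μl)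
          (mul_pos hg hθpos) (mul_pos hm hμl0)
        obtain ⟨ihrle, ihreq⟩ := ihr Br hvr (g * (1 - θ)) (m * (1 - μl))
          (mul_pos hg h1θ) (mul_pos hm h1μl)
        simp only [← hFldef, ← hvldef] at ihlle ihleq
        simp only [← hFrdef, ← hvrdef] at ihrle ihreq
        have hFlf : F * fl = Fl := by
          rw [hfldef, mul_div_cancel₀ _ hFpos.ne']
        have hFrf : F * (1 - fl) = Fr := by
          rw [mul_sub, mul_one, hFlf]; linarith [hF]
        obtain ⟨hbr_le, hbr_eq⟩ := bracket_ineq hfl0 hfl1 hμl0 hμl1 hc0 hc1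
        have e1 : (1 - c) * μl + c * fl = θ := hθdef.symm
        have e2 : (1 - c) * (1 - μl) + c * (1 - fl) = 1 - θ := by rw [hθdef]; ring
        rw [e1, e2] at hbr_le hbr_eq
        set K := (fl * Real.log θ + (1 - fl) * Real.log (1 - θ)) -
          (fl * Real.log μl + (1 - fl) * Real.log (1 - μl)) with hKdef
        clear_value K
        have hK0 : 0 ≤ K := by rw [hKdef]; linarith [hbr_le]
        have hid : Fl * Real.log (g * θ / (m * μl)) +
            Fr * Real.log (g * (1 - θ) / (m * (1 - μl))) =
            F * Real.log (g / m) + F * K := by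
          rw [hKdef, ← hFlf, ← hFrf,
            Real.log_div (mul_pos hg hθpos).ne' (mul_pos hm hμl0).ne',
            Real.log_mul hg.ne' hθpos.ne', Real.log_mul hm.ne' hμl0.ne',
            Real.log_div (mul_pos hg h1θ).ne' (mul_pos hm h1μl).ne',
            Real.log_mul hg.ne' h1θ.ne', Real.log_mul hm.ne' h1μl.ne',
            Real.log_div hg.ne' hm.ne']
          ring
        have hFK : 0 ≤ F * K := mul_nonneg hFpos.le hK0
        constructor
        · linarith [ihlle, ihrle, hid, hFK]
        · intro heq
          have hFKle : F * K ≤ 0 := by linarith [ihlle, ihrle, hid, heq]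
          have hKz : K = 0 := by
            refine le_antisymm ?_ hK0
            by_contra h
            push_neg at h
            have := mul_pos hFpos h
            linarith
          have hflμ : fl = μl := by
            apply hbr_eq
            have := sub_eq_zero.1 (hKdef.symm.trans hKz)
            linarith [this]
          have hFK0 : F * K = 0 := by rw [hKz, mul_zero]
          have him_l : improvement Ft l Bl (g * θ) (m * μl) =
              Fl * Real.log (g * θ / (m * μl)) := by linarith [hid, heq, ihlle, ihrle, hFK0]
          have him_r : improvement Ft r Br (g * (1 - θ)) (m * (1 - μl)) =
              Fr * Real.log (g * (1 - θ) / (m * (1 - μl))) := by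
            linarith [hid, heq, ihlle, ihrle, hFK0]
          have eqL := ihleq him_l
          have eqR := ihreq him_r
          have hFlvB : Fl * vB = F * vl := by
            rw [← hFlf, hflμ, hμldef]
            field_simp
          have hFrvB : Fr * vB = F * vr := by
            linear_combination (-vB) * hF + F * hvB - hFlvB
          intro A hA
          simp only [leafBoxes, List.mem_append] at hA
          rcases hA with hA | hA
          · rw [← hBldef] at hA
            have h1 := eqL A hA
            have h2 : ((Ft A.set).toReal * vB) * vl =
                (F * (volume A.set).toReal) * vl := by
              linear_combination vB * h1 + (volume A.set).toReal * hFlvB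
            exact mul_right_cancel₀ hvl0.ne' h2
          · rw [← hBrdef] at hA
            have h1 := eqR A hA
            have h2 : ((Ft A.set).toReal * vB) * vr =
                (F * (volume A.set).toReal) * vr := by
              linear_combination vB * h1 + (volume A.set).toReal * hFrvB
            exact mul_right_cancel₀ hvr0.ne' h2

/-- For a finite valid dyadic tree `T` on `(0,1]^d`, a probability measure
`F̃⁽ⁿ⁾` on `(0,1]^d`, and `G ∈ 𝒫_T` defined by the shrunken conditionals
`G(A_l|A) = (1−c(A))μ(A_l|A) + c(A)F̃⁽ⁿ⁾(A_l|A)` with `c(A) ∈ (0,1]`, the improvement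
`D = ∑_{A ∈ ℒ(T)} F̃⁽ⁿ⁾(A) log (G(A)/μ(A))` satisfies `D ≥ 0`, and `D > 0` unless
`F̃⁽ⁿ⁾(A) = μ(A)` for all leaves `A ∈ ℒ(T)`. -/
theorem stmt14
    {d : ℕ} (T : STree d) (hT : T.valid (unitBox d))
    (Ft : Measure (Fin d → ℝ)) [IsProbabilityMeasure Ft]
    (hFt : Ft (unitBox d).set = 1) :
    0 ≤ improvement Ft T (unitBox d) 1 1 ∧
      (improvement Ft T (unitBox d) 1 1 = 0 →
        ∀ B ∈ leafBoxes T (unitBox d), Ft B.set = volume B.set) := by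
  have hvunit : volume (unitBox d).set = 1 := by
    rw [Box.volume_eq]; simp [unitBox]
  obtain ⟨h1, h2⟩ := main_lemma Ft T (unitBox d) hT 1 1 one_pos one_pos
  constructor
  · simpa using h1
  · intro hD B hB
    have h3 := h2 (by rw [hD]; simp) B hB
    rw [hvunit, hFt] at h3
    simp only [ENNReal.toReal_one, mul_one, one_mul] at h3
    exact (ENNReal.toReal_eq_toReal_iff' (measure_ne_top Ft _) (Box.volume_lt_top B).ne).1 h3
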